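/- Let D ⊆ ℝⁿ be open with 0 ∈ D, let f : D → ℝⁿ be Lipschitz continuous with f(0) = 0, let N ⊆ D be a compact neighborhood of 0, and let V : D → ℝ be continuously differentiable with V(0) = 0, V(y) > 0 for every y ∈ N \ {0}, and ⟨∇V(y), f(y)⟩ ≤ 0 for every y ∈ N. Then the origin is Lyapunov stable for the system ẋ = f(x): for every ε > 0 there exists δ > 0 such that every differentiable curve x : [0,∞) → D satisfying x'(t) = f(x(t)) for all t ≥ 0 and ‖x(0)‖ < δ satisfies ‖x(t)‖ < ε for all t ≥ 0. -/

import Mathlib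

theorem stmt_4
    (n : ℕ) (hn : 1 ≤ n)
    (D : Set (EuclideanSpace ℝ (Fin n))) (hD : IsOpen D)
    (h0D : (0 : EuclideanSpace ℝ (Fin n)) ∈ D)
    (f : EuclideanSpace ℝ (Fin n) → EuclideanSpace ℝ (Fin n))
    (hfLip : ∃ K : NNReal, LipschitzOnWith K f D) (hf0 : f 0 = 0)
    (N : Set (EuclideanSpace ℝ (Fin n))) (hND : N ⊆ D)
    (hNcpt : IsCompact N) (hNnbd : N ∈ nhds (0 : EuclideanSpace ℝ (Fin n)))
    (V : EuclideanSpace ℝ (Fin n) → ℝ)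
    (hVsmooth : ContDiffOn ℝ 1 V D)
    (hV0 : V 0 = 0)
    (hVpos : ∀ y ∈ N, y ≠ 0 → 0 < V y)
    (hVdecr : ∀ y ∈ N, fderiv ℝ V y (f y) ≤ 0) :
    -- the origin is Lyapunov stable for ẋ = f(x)
    ∀ ε > (0 : ℝ), ∃ δ > (0 : ℝ), ∀ x : ℝ → EuclideanSpace ℝ (Fin n),
      (∀ t, 0 ≤ t → x t ∈ D) →
      (∀ t, 0 ≤ t → HasDerivAt x (f (x t)) t) →
      ‖x 0‖ < δ → ∀ t, 0 ≤ t → ‖x t‖ < ε := by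
  intro ε hε
  obtain ⟨r, hr, hrN⟩ := Metric.nhds_basis_closedBall.mem_iff.mp hNnbd
  set ε' : ℝ := min r ε with hε'def
  have hε'pos : 0 < ε' := lt_min hr hε
  have hε'ε : ε' ≤ ε := min_le_right _ _
  have hball : Metric.closedBall (0 : EuclideanSpace ℝ (Fin n)) ε' ⊆ N :=
    (Metric.closedBall_subset_closedBall (min_le_left _ _)).trans hrN
  have hVcont : ContinuousOn V D := hVsmooth.continuousOn
  haveI : Nonempty (Fin n) := Fin.pos_iff_nonempty.mp hn
  haveI : Nontrivial (EuclideanSpace ℝ (Fin n)) := inferInstance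
  have hsphN : Metric.sphere (0 : EuclideanSpace ℝ (Fin n)) ε' ⊆ N :=
    Metric.sphere_subset_closedBall.trans hball
  have hsph : (Metric.sphere (0 : EuclideanSpace ℝ (Fin n)) ε').Nonempty :=
    NormedSpace.sphere_nonempty.mpr hε'pos.le
  obtain ⟨y0, hy0, hy0min⟩ :=
    (isCompact_sphere (0 : EuclideanSpace ℝ (Fin n)) ε').exists_isMinOn hsph
      (hVcont.mono (hsphN.trans hND))
  set m : ℝ := V y0 with hmdef
  have hy0ne : y0 ≠ 0 := by
    intro h
    rw [h] at hy0
    simp [Metric.mem_sphere] at hy0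
    exact hε'pos.ne hy0
  have hm : 0 < m := hVpos y0 (hsphN hy0) hy0ne
  -- continuity of V at 0 : find δ' with V < m on ball δ'
  have hVat0 : ContinuousAt V 0 := hVcont.continuousAt (hD.mem_nhds h0D)
  have hpre : {y | V y < m} ∈ nhds (0 : EuclideanSpace ℝ (Fin n)) := by
    have : Set.Iio m ∈ nhds (V 0) := by
      rw [hV0]; exact Iio_mem_nhds hm
    exact hVat0.preimage_mem_nhds this
  obtain ⟨δ', hδ', hδ'sub⟩ := Metric.mem_nhds_iff.mp hpre
  set δ : ℝ := min δ' ε' with hδdef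
  refine ⟨δ, lt_min hδ' hε'pos, ?_⟩
  intro x hxD hx hx0 t ht
  -- main claim : ∀ t ≥ 0, ‖x t‖ < ε'
  have main : ∀ s : ℝ, 0 ≤ s → ‖x s‖ < ε' := by
    by_contra hcon
    push_neg at hcon
    obtain ⟨t1, ht1, hnt1⟩ := hcon
    set S : Set ℝ := {s | 0 ≤ s ∧ ε' ≤ ‖x s‖} with hSdef
    have hSne : S.Nonempty := ⟨t1, ht1, hnt1⟩
    have hSbdd : BddBelow S := ⟨0, fun s hs => hs.1⟩
    set t₀ : ℝ := sInf S with ht₀def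
    have ht₀0 : 0 ≤ t₀ := le_csInf hSne fun s hs => hs.1
    -- x is continuous at every s ≥ 0
    have hxc : ∀ s : ℝ, 0 ≤ s → ContinuousAt x s := fun s hs => (hx s hs).continuousAt
    -- ε' ≤ ‖x t₀‖
    have ht₀mem : ε' ≤ ‖x t₀‖ := by
      obtain ⟨u, -, hu, hmem⟩ := exists_seq_tendsto_sInf hSne hSbdd
      have htend : Filter.Tendsto (fun k => ‖x (u k)‖) Filter.atTop (nhds ‖x t₀‖) :=
        ((hxc t₀ ht₀0).tendsto.comp hu).norm
      exact ge_of_tendsto htend (Filter.Eventually.of_forall fun k => (hmem k).2)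
    have ht₀pos : 0 < t₀ := by
      rcases ht₀0.lt_or_eq with h | h
      · exact h
      · exfalso
        rw [← h] at ht₀mem
        have : ‖x 0‖ < ε' := lt_of_lt_of_le hx0 (min_le_right _ _)
        linarith
    -- for 0 ≤ s < t₀, ‖x s‖ < ε'
    have hlt : ∀ s : ℝ, 0 ≤ s → s < t₀ → ‖x s‖ < ε' := by
      intro s hs hst
      by_contra h
      push_neg at h
      exact absurd (csInf_le hSbdd ⟨hs, h⟩) (not_le_of_gt hst)
    -- ‖x t₀‖ ≤ ε'
    have ht₀le : ‖x t₀‖ ≤ ε' := by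
      have htend : Filter.Tendsto (fun s => ‖x s‖) (nhdsWithin t₀ (Set.Iio t₀)) (nhds ‖x t₀‖) :=
        ((hxc t₀ ht₀0).continuousWithinAt.tendsto).norm
      refine le_of_tendsto htend ?_
      filter_upwards [Ioo_mem_nhdsLT_of_mem ⟨ht₀pos, le_refl t₀⟩] with s hs
      exact (hlt s hs.1.le hs.2).le
    have ht₀eq : ‖x t₀‖ = ε' := le_antisymm ht₀le ht₀mem
    -- x s ∈ N for s ∈ [0, t₀]
    have hxN : ∀ s ∈ Set.Icc (0 : ℝ) t₀, x s ∈ N := by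
      intro s hs
      apply hball
      rw [Metric.mem_closedBall, dist_zero_right]
      rcases hs.2.lt_or_eq with h | h
      · exact (hlt s hs.1 h).le
      · rw [h, ht₀eq]
    -- derivative of V ∘ x
    have hg : ∀ s ∈ Set.Icc (0 : ℝ) t₀,
        HasDerivAt (fun u => V (x u)) (fderiv ℝ V (x s) (f (x s))) s := by
      intro s hs
      have hVd : DifferentiableAt ℝ V (x s) :=
        (hVsmooth.contDiffAt (hD.mem_nhds (hxD s hs.1))).differentiableAt one_ne_zero
      exact hVd.hasFDerivAt.comp_hasDerivAt s (hx s hs.1)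
    have hanti : AntitoneOn (fun u => V (x u)) (Set.Icc 0 t₀) := by
      apply antitoneOn_of_deriv_nonpos (convex_Icc 0 t₀)
      · exact fun s hs => ((hg s hs).continuousAt).continuousWithinAt
      · intro s hs
        rw [interior_Icc] at hs
        exact ((hg s ⟨hs.1.le, hs.2.le⟩).differentiableAt).differentiableWithinAt
      · intro s hs
        rw [interior_Icc] at hs
        have hs' : s ∈ Set.Icc (0 : ℝ) t₀ := ⟨hs.1.le, hs.2.le⟩
        rw [(hg s hs').deriv]
        exact hVdecr (x s) (hxN s hs')
    have h1 : V (x t₀) ≤ V (x 0) :=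
      hanti ⟨le_refl 0, ht₀0⟩ ⟨ht₀0, le_refl t₀⟩ ht₀0
    have h2 : V (x 0) < m := by
      apply hδ'sub
      rw [Metric.mem_ball, dist_zero_right]
      exact lt_of_lt_of_le hx0 (min_le_left _ _)
    have h3 : m ≤ V (x t₀) := by
      apply hy0min
      rw [Metric.mem_sphere, dist_zero_right]
      exact ht₀eq
    linarith
  exact lt_of_lt_of_le (main t ht) hε'ε
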